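/- Let Λ = (λ_k)_{k≥0} be a strictly increasing sequence of positive real numbers satisfying the Müntz condition Σ_k 1/λ_k < ∞, and let V_Λ be the restriction of the Volterra operator to M_Λ^1, viewed as an operator into C([0,1]). Then V_Λ is not weakly compact: the closure, in the weak topology of C([0,1]), of the image under V of the closed unit ball of M_Λ^1 is not weakly compact. -/

import Mathlib

open MeasureTheory Set
open Filter Topology

/-- Lebesgue measure restricted to `[0,1]`. -/
noncomputable def mu01 : Measure ℝ := volume.restrict (Icc (0:ℝ) 1)

/-- The Müntz space `M_Λ^1`: the closure in `L¹([0,1])` of the linear span of the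
monomials `t ↦ t ^ Λ k`. -/
noncomputable def muntzSpace (Λ : ℕ → ℝ) : Submodule ℝ (Lp ℝ 1 mu01) :=
  (Submodule.span ℝ {f : Lp ℝ 1 mu01 |
    ∃ k : ℕ, (f : ℝ → ℝ) =ᵐ[mu01] fun t => t ^ Λ k}).topologicalClosure

/-- A bounded linear operator between normed spaces is weakly compact if the closure,
in the weak topology of the codomain, of the image of the closed unit ball is compact. -/
def IsWeaklyCompactOperator {X Y : Type*} [NormedAddCommGroup X] [NormedSpace ℝ X]
    [NormedAddCommGroup Y] [NormedSpace ℝ Y] (S : X →L[ℝ] Y) : Prop :=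
  IsCompact (closure ((toWeakSpace ℝ Y) '' (⇑S '' Metric.closedBall 0 1)))

instance : IsFiniteMeasure mu01 := ⟨by simp [mu01]⟩

lemma mon_memLp {c : ℝ} (hc : 0 < c) : MemLp (fun t : ℝ => t ^ c) 1 mu01 := by
  refine MemLp.of_bound (Real.continuous_rpow_const hc.le).aestronglyMeasurable 1 ?_
  rw [mu01]
  filter_upwards [ae_restrict_mem measurableSet_Icc] with t ht
  rw [Real.norm_eq_abs, abs_of_nonneg (Real.rpow_nonneg ht.1 c)]
  exact Real.rpow_le_one ht.1 ht.2 hc.le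

lemma mon_setIntegral {c x : ℝ} (hc : 0 < c) (hx : 0 ≤ x) :
    ∫ t in Ioc (0:ℝ) x, t ^ c ∂volume = x ^ (c + 1) / (c + 1) := by
  rw [← intervalIntegral.integral_of_le hx,
    integral_rpow (Or.inl (by linarith)),
    Real.zero_rpow (by positivity)]
  ring

lemma mon_integral {c : ℝ} (hc : 0 < c) : ∫ t, t ^ c ∂mu01 = 1 / (c + 1) := by
  have : ∫ t, t ^ c ∂mu01 = ∫ t in Icc (0:ℝ) 1, t ^ c ∂volume := rfl
  rw [this, integral_Icc_eq_integral_Ioc, mon_setIntegral hc (by norm_num), Real.one_rpow]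

lemma clusterPt_eq_of_tendsto {u : ℕ → ℝ} {a b : ℝ}
    (h : ClusterPt a (Filter.map u atTop)) (h' : Tendsto u atTop (𝓝 b)) : a = b :=
  eq_of_nhds_neBot (h.mono h')

/-- Let `Λ` be a strictly increasing sequence of positive numbers
satisfying the Müntz condition `∑ 1/λ_k < ∞`, and let `V_Λ : M_Λ^1 → C([0,1])` be the
restriction of the Volterra operator. Then `V_Λ` is not weakly compact: the closure in
the weak topology of `C([0,1])` of the image of the closed unit ball is not compact. -/
theorem volterra_restriction_not_weaklyCompact
    (Λ : ℕ → ℝ) (hmono : StrictMono Λ) (hpos : ∀ k, 0 < Λ k)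
    (hmuntz : Summable fun k => 1 / Λ k)
    (V : ↥(muntzSpace Λ) →L[ℝ] C(Icc (0:ℝ) 1, ℝ))
    (hV : ∀ (f : ↥(muntzSpace Λ)) (x : Icc (0:ℝ) 1),
      V f x = ∫ t in Ioc (0:ℝ) (x:ℝ), ((f : Lp ℝ 1 mu01) : ℝ → ℝ) t ∂mu01) :
    ¬ IsWeaklyCompactOperator V := by
  intro hK
  set Y := C(Icc (0:ℝ) 1, ℝ)
  -- the normalized monomials
  have hmem : ∀ k : ℕ, (Λ k + 1) • (mon_memLp (hpos k)).toLp _ ∈ muntzSpace Λ := by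
    intro k
    refine Submodule.le_topologicalClosure _ ?_
    exact Submodule.smul_mem _ _ (Submodule.subset_span ⟨k, (mon_memLp (hpos k)).coeFn_toLp⟩)
  set F : ℕ → ↥(muntzSpace Λ) := fun k => ⟨_, hmem k⟩ with hF
  -- norm of F k is 1
  have hnorm : ∀ k, ‖F k‖ ≤ 1 := by
    intro k
    have h1 : ‖F k‖ = ‖(Λ k + 1) • (mon_memLp (hpos k)).toLp _‖ := rfl
    rw [h1, norm_smul, Lp.norm_toLp]
    have h2 : (eLpNorm (fun t : ℝ => t ^ Λ k) 1 mu01).toReal = ∫ t, t ^ Λ k ∂mu01 := by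
      rw [eLpNorm_one_eq_lintegral_enorm,
        integral_eq_lintegral_of_nonneg_ae ?_ (mon_memLp (hpos k)).aestronglyMeasurable]
      · congr 1
        refine lintegral_congr_ae ?_
        rw [mu01]
        filter_upwards [ae_restrict_mem measurableSet_Icc] with t ht
        rw [← ofReal_norm, Real.norm_eq_abs,
          abs_of_nonneg (Real.rpow_nonneg ht.1 _)]
      · rw [mu01]
        filter_upwards [ae_restrict_mem measurableSet_Icc] with t ht
        exact Real.rpow_nonneg ht.1 _
    rw [h2, mon_integral (hpos k), Real.norm_eq_abs,
      abs_of_pos (by linarith [hpos k]), mul_one_div,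
      div_self (ne_of_gt (by linarith [hpos k]))]
  -- the values of V (F k)
  have hval : ∀ (k : ℕ) (x : Icc (0:ℝ) 1), V (F k) x = (x : ℝ) ^ (Λ k + 1) := by
    intro k x
    rw [hV]
    have hae : ((F k : Lp ℝ 1 mu01) : ℝ → ℝ) =ᵐ[mu01]
        fun t => (Λ k + 1) * t ^ Λ k := by
      have h1 : ((F k : Lp ℝ 1 mu01) : ℝ → ℝ) =ᵐ[mu01]
          (Λ k + 1) • (((mon_memLp (hpos k)).toLp _ : Lp ℝ 1 mu01) : ℝ → ℝ) :=
        Lp.coeFn_smul _ _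
      refine h1.trans ?_
      filter_upwards [(mon_memLp (hpos k)).coeFn_toLp] with t ht
      simp [ht]
    rw [integral_congr_ae (ae_restrict_of_ae hae)]
    have hsub : Ioc (0:ℝ) (x:ℝ) ⊆ Icc (0:ℝ) 1 :=
      fun t ht => ⟨ht.1.le, ht.2.trans x.2.2⟩
    rw [mu01, Measure.restrict_restrict measurableSet_Ioc, inter_eq_left.mpr hsub,
      integral_const_mul, mon_setIntegral (hpos k) x.2.1,
      mul_div_cancel₀ _ (ne_of_gt (by linarith [hpos k]))]
  -- V (F k) lies in the compact set
  set seq : ℕ → WeakSpace ℝ Y := fun k => toWeakSpace ℝ Y (V (F k)) with hseq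
  have hseqmem : ∀ k, seq k ∈
      closure ((toWeakSpace ℝ Y) '' (⇑V '' Metric.closedBall 0 1)) := by
    intro k
    exact subset_closure ⟨V (F k), ⟨F k, Metric.mem_closedBall.mpr (by
      simpa using hnorm k), rfl⟩, rfl⟩
  have hle : Filter.map seq atTop ≤
      𝓟 (closure ((toWeakSpace ℝ Y) '' (⇑V '' Metric.closedBall 0 1))) :=
    le_principal_iff.mpr (Filter.mem_map.mpr (Filter.univ_mem' hseqmem))
  obtain ⟨g, hgmem, hg⟩ := hK.exists_clusterPt hle
  -- evaluation functionals
  have heval : ∀ x : Icc (0:ℝ) 1,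
      ClusterPt ((toWeakSpace ℝ Y).symm g x) (Filter.map (fun k => (x:ℝ) ^ (Λ k + 1)) atTop) := by
    intro x
    have hcont : Continuous fun h : WeakSpace ℝ Y =>
        ((topDualPairing ℝ Y).flip h) (ContinuousMap.evalCLM ℝ x) :=
      WeakBilin.eval_continuous _ _
    have := hg.map (hcont.continuousAt) (Filter.tendsto_map)
    rw [Filter.map_map] at this
    have hcongr : (fun h : WeakSpace ℝ Y =>
        ((topDualPairing ℝ Y).flip h) (ContinuousMap.evalCLM ℝ x)) ∘ seq
        = fun k => (x:ℝ) ^ (Λ k + 1) := by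
      funext k
      exact hval k x
    rw [hcongr] at this
    exact this
  -- Λ tends to infinity
  have hΛtop : Tendsto Λ atTop atTop := by
    have h0 : Tendsto (fun k => 1 / Λ k) atTop (𝓝[>] 0) := by
      refine tendsto_nhdsWithin_of_tendsto_nhds_of_eventually_within _
        hmuntz.tendsto_atTop_zero (Filter.Eventually.of_forall fun k => ?_)
      exact one_div_pos.mpr (hpos k)
    have := h0.inv_tendsto_nhdsGT_zero
    simpa [Pi.inv_def, one_div, inv_inv] using this
  have hΛtop' : Tendsto (fun k => Λ k + 1) atTop atTop :=
    tendsto_atTop_add_const_right _ 1 hΛtop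
  set G : C(Icc (0:ℝ) 1, ℝ) := (toWeakSpace ℝ Y).symm g with hG
  -- G x = 0 for x < 1
  have hzero : ∀ x : Icc (0:ℝ) 1, (x:ℝ) < 1 → G x = 0 := by
    intro x hx
    refine clusterPt_eq_of_tendsto (heval x) ?_
    exact (tendsto_rpow_atTop_of_base_lt_one _ (by linarith [x.2.1]) hx).comp hΛtop'
  -- G 1 = 1
  have hone : G ⟨1, by norm_num, le_refl 1⟩ = 1 := by
    refine clusterPt_eq_of_tendsto (heval _) ?_
    simpa [Real.one_rpow] using (tendsto_const_nhds :
      Tendsto (fun _ : ℕ => (1:ℝ)) atTop (𝓝 1))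
  -- contradiction with continuity of G at 1
  have hxseq : ∀ n : ℕ, (1 - 1/((n:ℝ)+1)) ∈ Icc (0:ℝ) 1 := by
    intro n
    constructor
    · have h1 : 1/((n:ℝ)+1) ≤ 1 := by
        rw [div_le_one (by positivity)]
        linarith [Nat.cast_nonneg (α := ℝ) n]
      linarith
    · have h2 : 0 < 1/((n:ℝ)+1) := by positivity
      linarith
  have htend : Tendsto (fun n : ℕ => (⟨1 - 1/((n:ℝ)+1), hxseq n⟩ : Icc (0:ℝ) 1))
      atTop (𝓝 ⟨1, by norm_num, le_refl 1⟩) := by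
    rw [tendsto_subtype_rng]
    simpa using (tendsto_const_nhds (x := (1:ℝ))).sub tendsto_one_div_add_atTop_nhds_zero_nat
  have hcomp : Tendsto (fun n : ℕ => G ⟨1 - 1/((n:ℝ)+1), hxseq n⟩) atTop
      (𝓝 (G ⟨1, by norm_num, le_refl 1⟩)) :=
    (G.continuous.continuousAt.tendsto).comp htend
  have hzero' : (fun n : ℕ => G ⟨1 - 1/((n:ℝ)+1), hxseq n⟩) = fun _ => (0:ℝ) := by
    funext n
    refine hzero _ ?_
    have h2 : 0 < 1/((n:ℝ)+1) := by positivity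
    simpa using by linarith
  rw [hzero', hone] at hcomp
  exact one_ne_zero (tendsto_nhds_unique hcomp tendsto_const_nhds)
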